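/- Let θ, ψ₁, ψ₂ be real, let ε_A ∈ [−1/2, 1/2], let α, β be nonnegative reals with α² = 1/2 + ε_A and β² = 1/2 − ε_A, and let Ψ' be the biased shared state α|0⟩|φ₀⟩ + β|1⟩|φ₁⟩. Then the CHSH success probability satisfies S(Ψ') = 1/2 + (1/8) sin θ (sin ψ₁ + sin ψ₂) + (1/4) √(1/4 − ε_A²) (cos ψ₁ − cos ψ₂) + (1/4) ε_A cos θ (cos ψ₁ + cos ψ₂). -/

import Mathlib

open scoped ComplexInnerProductSpace

/-- Tensor product of two qubit vectors, realized in `EuclideanSpace ℂ (Fin 2 × Fin 2)`. -/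
noncomputable def tensor2 (u v : EuclideanSpace ℂ (Fin 2)) :
    EuclideanSpace ℂ (Fin 2 × Fin 2) :=
  WithLp.toLp 2 (fun p : Fin 2 × Fin 2 => u p.1 * v p.2)

/-- Bob's first-qubit measurement vectors: for input `x = 0` the computational basis,
for `x = 1` the Hadamard basis. -/
noncomputable def eVec (x a : Fin 2) : EuclideanSpace ℂ (Fin 2) :=
  if x = 0 then WithLp.toLp 2 (fun i : Fin 2 => if i = a then 1 else 0)
  else WithLp.toLp 2 (fun i : Fin 2 => ((Real.sqrt 2 : ℂ))⁻¹ * (if a = 1 ∧ i = 1 then -1 else 1))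

/-- Second-qubit measurement vectors for angle `ψ`. -/
noncomputable def fVec (ψ : ℝ) (b : Fin 2) : EuclideanSpace ℂ (Fin 2) :=
  if b = 0 then WithLp.toLp 2 (fun i : Fin 2 => if i = 0 then (Real.cos (ψ / 2) : ℂ) else (Real.sin (ψ / 2) : ℂ))
  else WithLp.toLp 2 (fun i : Fin 2 => if i = 0 then -(Real.sin (ψ / 2) : ℂ) else (Real.cos (ψ / 2) : ℂ))

/-- The CHSH success probability of a two-qubit state `Ψ` for measurement angles
`ψ₁` (input `y = 0`) and `ψ₂` (input `y = 1`). -/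
noncomputable def chshS (ψ₁ ψ₂ : ℝ) (Ψ : EuclideanSpace ℂ (Fin 2 × Fin 2)) : ℝ :=
  (1 / 4) * ∑ x : Fin 2, ∑ y : Fin 2, ∑ a : Fin 2, ∑ b : Fin 2,
    if a + b = x * y then
      ‖⟪tensor2 (eVec x a) (fVec (if y = 0 then ψ₁ else ψ₂) b), Ψ⟫‖ ^ 2
    else 0

/-- The biased shared state `α|0⟩|φ₀⟩ + β|1⟩|φ₁⟩`, with
`|φ₀⟩ = cos(θ/2)|0⟩ + sin(θ/2)|1⟩` and `|φ₁⟩ = cos(θ/2)|0⟩ − sin(θ/2)|1⟩`. -/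
noncomputable def biasedState (θ α β : ℝ) : EuclideanSpace ℂ (Fin 2 × Fin 2) :=
  WithLp.toLp 2 (fun p : Fin 2 × Fin 2 => (if p.1 = 0 then (α : ℂ) else (β : ℂ)) *
    (if p.2 = 0 then (Real.cos (θ / 2) : ℂ)
     else if p.1 = 0 then (Real.sin (θ / 2) : ℂ) else -(Real.sin (θ / 2) : ℂ)))

theorem stmt_6 (θ ψ₁ ψ₂ : ℝ) (εA : ℝ) (hεA : εA ∈ Set.Icc (-(1 / 2) : ℝ) (1 / 2))
    (α β : ℝ) (hα : 0 ≤ α) (hβ : 0 ≤ β)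
    (hα2 : α ^ 2 = 1 / 2 + εA) (hβ2 : β ^ 2 = 1 / 2 - εA) :
    chshS ψ₁ ψ₂ (biasedState θ α β) =
      1 / 2 + (1 / 8) * Real.sin θ * (Real.sin ψ₁ + Real.sin ψ₂)
        + (1 / 4) * Real.sqrt (1 / 4 - εA ^ 2) * (Real.cos ψ₁ - Real.cos ψ₂)
        + (1 / 4) * εA * Real.cos θ * (Real.cos ψ₁ + Real.cos ψ₂) := by
  obtain ⟨hL, hR⟩ := hεA
  have hab : Real.sqrt (1 / 4 - εA ^ 2) = α * β := by
    have h : (α * β) ^ 2 = 1 / 4 - εA ^ 2 := by rw [mul_pow, hα2, hβ2]; ring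
    rw [← h, Real.sqrt_sq (mul_nonneg hα hβ)]
  have hsθ : Real.sin θ = 2 * Real.sin (θ / 2) * Real.cos (θ / 2) := by
    rw [← Real.sin_two_mul]; ring_nf
  have hcθ : Real.cos θ = 2 * Real.cos (θ / 2) ^ 2 - 1 := by
    rw [← Real.cos_two_mul]; ring_nf
  have hs1 : Real.sin ψ₁ = 2 * Real.sin (ψ₁ / 2) * Real.cos (ψ₁ / 2) := by
    rw [← Real.sin_two_mul]; ring_nf
  have hc1 : Real.cos ψ₁ = 2 * Real.cos (ψ₁ / 2) ^ 2 - 1 := by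
    rw [← Real.cos_two_mul]; ring_nf
  have hs2 : Real.sin ψ₂ = 2 * Real.sin (ψ₂ / 2) * Real.cos (ψ₂ / 2) := by
    rw [← Real.sin_two_mul]; ring_nf
  have hc2 : Real.cos ψ₂ = 2 * Real.cos (ψ₂ / 2) ^ 2 - 1 := by
    rw [← Real.cos_two_mul]; ring_nf
  have hp0 : Real.sin (θ / 2) ^ 2 + Real.cos (θ / 2) ^ 2 = 1 := Real.sin_sq_add_cos_sq _
  have hp1 : Real.sin (ψ₁ / 2) ^ 2 + Real.cos (ψ₁ / 2) ^ 2 = 1 := Real.sin_sq_add_cos_sq _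
  have hp2 : Real.sin (ψ₂ / 2) ^ 2 + Real.cos (ψ₂ / 2) ^ 2 = 1 := Real.sin_sq_add_cos_sq _
  have hr : ((Real.sqrt 2)⁻¹ : ℝ) ^ 2 = 1 / 2 := by
    rw [inv_pow, Real.sq_sqrt (by norm_num : (0:ℝ) ≤ 2)]; norm_num
  rw [hab, hsθ, hcθ, hs1, hc1, hs2, hc2]
  simp only [chshS, tensor2, eVec, fVec, biasedState, PiLp.inner_apply, PiLp.toLp_apply, RCLike.inner_apply,
    Fin.sum_univ_two, Fintype.sum_prod_type, Fin.isValue, Fin.reduceAdd, Fin.reduceMul,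
    Fin.reduceEq, if_true, if_false, reduceIte, Complex.conj_ofReal, one_mul, zero_mul,
    mul_zero, mul_one, add_zero, zero_add, and_true, true_and, and_false, false_and,
    and_self, map_zero, mul_neg_one, neg_neg, neg_mul, mul_neg, ← Complex.ofReal_inv, ← Complex.ofReal_mul,
    ← Complex.ofReal_neg, ← Complex.ofReal_add, Complex.norm_real, Real.norm_eq_abs, sq_abs]
  linear_combination ((1/4)*Real.cos (ψ₁/2)^2*α^2 + (1/4)*Real.sin (ψ₁/2)^2*β^2 + (1/4)*Real.cos (ψ₂/2)^2*α^2 + (1/4)*Real.sin (ψ₂/2)^2*β^2 + (1/4)*Real.cos (ψ₁/2)^2*α^2*(Real.sqrt 2)⁻¹^2 + (1/2)*Real.cos (ψ₁/2)^2*α*β*(Real.sqrt 2)⁻¹^2 + (1/4)*Real.cos (ψ₁/2)^2*β^2*(Real.sqrt 2)⁻¹^2 + (1/4)*Real.sin (ψ₁/2)^2*α^2*(Real.sqrt 2)⁻¹^2 + (-1/2)*Real.sin (ψ₁/2)^2*α*β*(Real.sqrt 2)⁻¹^2 + (1/4)*Real.sin (ψ₁/2)^2*β^2*(Real.sqrt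 2)⁻¹^2 + (1/4)*Real.sin (ψ₂/2)^2*α^2*(Real.sqrt 2)⁻¹^2 + (1/2)*Real.sin (ψ₂/2)^2*α*β*(Real.sqrt 2)⁻¹^2 + (1/4)*Real.sin (ψ₂/2)^2*β^2*(Real.sqrt 2)⁻¹^2 + (1/4)*Real.cos (ψ₂/2)^2*α^2*(Real.sqrt 2)⁻¹^2 + (-1/2)*Real.cos (ψ₂/2)^2*α*β*(Real.sqrt 2)⁻¹^2 + (1/4)*Real.cos (ψ₂/2)^2*β^2*(Real.sqrt 2)⁻¹^2 + -1*Real.cos (ψ₁/2)^2*εA + εA + -1*Real.cos (ψ₂/2)^2*εA) * hp0 + ((1/4)*Real.sin (θ/2)^2*β^2 + (-1/2)*α*β + (-1/2)*εA + (-1/4)*Real.sin (θ/2)^2*α^2 + (1/4)*α^2 + (1/4)*α^2*(Real.sqrt 2)⁻¹^2 + (1/2)*α*β*(Real.sqrt 2)⁻¹^2 + (1/4)*β^2*(Real.sqrt 2)⁻¹^2 + Real.sin (θ/2)^2*εA) * hp1 + ((1/4)*Real.sin (θ/2)^2*β^2 + (1/2)*α*β + (-1/2)*εA + (-1/4)*Real.sin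 (θ/2)^2*α^2 + (1/4)*α^2 + (1/4)*α^2*(Real.sqrt 2)⁻¹^2 + (-1/2)*α*β*(Real.sqrt 2)⁻¹^2 + (1/4)*β^2*(Real.sqrt 2)⁻¹^2 + Real.sin (θ/2)^2*εA) * hp2 + (-1*Real.sin (ψ₁/2)^2*α*β + Real.sin (ψ₂/2)^2*α*β + (1/2)*α^2 + (1/2)*β^2) * hr + ((1/2)*Real.sin (θ/2)*Real.cos (θ/2)*Real.sin (ψ₁/2)*Real.cos (ψ₁/2) + (1/2)*Real.sin (θ/2)^2*Real.sin (ψ₁/2)^2 + (1/2)*Real.sin (θ/2)*Real.cos (θ/2)*Real.sin (ψ₂/2)*Real.cos (ψ₂/2) + (1/2)*Real.sin (θ/2)^2*Real.sin (ψ₂/2)^2 + (-1/2)*Real.sin (θ/2)^2 + (-1/4)*Real.sin (ψ₁/2)^2 + (3/4) + (-1/4)*Real.sin (ψ₂/2)^2) * hα2 + ((1/2)*Real.sin (θ/2)*Real.cos (θ/2)*Real.sin (ψ₁/2)*Real.cos (ψ₁/2) + (1/2)*Real.sin (θ/2)*Real.cos (θ/2)*Real.sin (ψ₂/2)*Real.cos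 (ψ₂/2) + (-1/2)*Real.sin (θ/2)^2*Real.sin (ψ₁/2)^2 + (1/4)*Real.sin (ψ₁/2)^2 + (-1/2)*Real.sin (θ/2)^2*Real.sin (ψ₂/2)^2 + (1/4)*Real.sin (ψ₂/2)^2 + (1/2)*Real.sin (θ/2)^2 + (1/4)) * hβ2
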